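/- With the notation of the junction tree KL formula, KL(P, P_J) = −H(X) + Σ_{C∈𝒞} H(X_C) − Σ_{S∈𝒮} (ν_S − 1) H(X_S); in particular, minimizing KL over junction tree structures is equivalent to minimizing Σ_{C∈𝒞} H(X_C) − Σ_{S∈𝒮} (ν_S − 1) H(X_S). -/

import Mathlib

open scoped Classical BigOperators

namespace TCherryPaper
variable {d : ℕ} {Ω : Type} [Fintype Ω]

/-- Marginal of `p` on coordinates `S`, evaluated at a full configuration `y`. -/
noncomputable def marg (p : (Fin d → Ω) → ℝ) (S : Finset (Fin d)) (y : Fin d → Ω) : ℝ :=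
  ∑ x : Fin d → Ω, if ∀ i ∈ S, x i = y i then p x else 0

/-- Shannon entropy of the marginal of `p` on coordinates `S` (as `-E_p[log P(X_S)]`). -/
noncomputable def Hm (p : (Fin d → Ω) → ℝ) (S : Finset (Fin d)) : ℝ :=
  -∑ y : Fin d → Ω, p y * Real.log (marg p S y)

/-- Information content `I(X_S) = ∑_{i∈S} H(X_i) − H(X_S)`. -/
noncomputable def info (p : (Fin d → Ω) → ℝ) (S : Finset (Fin d)) : ℝ :=
  (∑ i ∈ S, Hm p {i}) - Hm p S

/-- Kullback–Leibler divergence. -/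
noncomputable def KL (p q : (Fin d → Ω) → ℝ) : ℝ :=
  ∑ y : Fin d → Ω, p y * Real.log (p y / q y)

def IsProb (p : (Fin d → Ω) → ℝ) : Prop := (∀ y, 0 ≤ p y) ∧ ∑ y, p y = 1

/-- The `j`-th running-intersection separator of an ordered list of clusters. -/
def sep (Cs : List (Finset (Fin d))) (j : ℕ) : Finset (Fin d) :=
  Cs.getD j ∅ ∩ (Cs.take j).foldr (· ∪ ·) ∅

/-- Running intersection property. -/
def RIP (Cs : List (Finset (Fin d))) : Prop :=
  ∀ j, 1 ≤ j → j < Cs.length → ∃ i < j, sep Cs j ⊆ Cs.getD i ∅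

/-- `𝒞` is the cluster set and `𝒮` the separator set of a junction tree. -/
def IsJunctionTree (𝒞 𝒮 : Finset (Finset (Fin d))) : Prop :=
  (∀ C₁ ∈ 𝒞, ∀ C₂ ∈ 𝒞, C₁ ⊆ C₂ → C₁ = C₂) ∧
  ∃ Cs : List (Finset (Fin d)), Cs ≠ [] ∧ Cs.Nodup ∧ Cs.toFinset = 𝒞 ∧ RIP Cs ∧
    𝒮 = (((List.range Cs.length).filter (fun j => 1 ≤ j)).map (sep Cs)).toFinset

/-- `ν_S`: the number of clusters containing `S`. -/
def nu (𝒞 : Finset (Finset (Fin d))) (S : Finset (Fin d)) : ℕ :=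
  (𝒞.filter (fun C => S ⊆ C)).card

/-- The junction tree probability distribution. -/
noncomputable def jtPD (p : (Fin d → Ω) → ℝ) (𝒞 𝒮 : Finset (Finset (Fin d)))
    (y : Fin d → Ω) : ℝ :=
  (∏ C ∈ 𝒞, marg p C y) / ∏ S ∈ 𝒮, (marg p S y) ^ (nu 𝒞 S - 1)

/-- Conditional independence of `X_A` and `X_B` given `X_C`. -/
def CI (p : (Fin d → Ω) → ℝ) (A B C : Finset (Fin d)) : Prop :=
  ∀ y, marg p (A ∪ B ∪ C) y * marg p C y = marg p (A ∪ C) y * marg p (B ∪ C) y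


lemma marg_univ (p : (Fin d → Ω) → ℝ) (y : Fin d → Ω) :
    marg p Finset.univ y = p y := by
  unfold marg
  have h : ∀ x : Fin d → Ω, (∀ i ∈ Finset.univ, x i = y i) ↔ x = y := by
    intro x; simp [funext_iff]
  rw [Finset.sum_congr rfl (fun x _ => by rw [if_congr (h x) rfl rfl])]
  simp

lemma marg_pos (p : (Fin d → Ω) → ℝ) (hp : ∀ y, 0 ≤ p y) (S : Finset (Fin d))
    (y : Fin d → Ω) (hy : 0 < p y) : 0 < marg p S y := by
  have hle : p y ≤ marg p S y := by
    have : (if ∀ i ∈ S, (y : Fin d → Ω) i = y i then p y else 0) = p y := by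
      simp
    rw [← this]
    exact Finset.single_le_sum (f := fun x => if ∀ i ∈ S, x i = y i then p x else 0)
      (fun x _ => by split <;> [exact hp x; exact le_rfl]) (Finset.mem_univ y)
  linarith

/-- Malvestuto's form of the KL formula:
`KL(P, P_J) = −H(X) + Σ_{C∈𝒞} H(X_C) − Σ_{S∈𝒮} (ν_S − 1) H(X_S)`; since `−H(X)` does not
depend on the junction tree structure, minimizing `KL` over junction tree structures is the
same as minimizing `Σ_{C∈𝒞} H(X_C) − Σ_{S∈𝒮} (ν_S − 1) H(X_S)`. -/
theorem KL_junction_tree_entropy_formula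
    {d : ℕ} {Ω : Type} [Fintype Ω] (p : (Fin d → Ω) → ℝ) (hp : IsProb p)
    (𝒞 𝒮 : Finset (Finset (Fin d))) (hJT : IsJunctionTree 𝒞 𝒮)
    (hcover : 𝒞.sup id = Finset.univ)
    (hpos : ∀ y, 0 < p y → 0 < jtPD p 𝒞 𝒮 y) :
    KL p (jtPD p 𝒞 𝒮) =
      -(Hm p Finset.univ) + (∑ C ∈ 𝒞, Hm p C) -
        ∑ S ∈ 𝒮, ((nu 𝒞 S : ℝ) - 1) * Hm p S := by
  obtain ⟨hanti, Cs, hne, hnodup, hCs, hrip, hSdef⟩ := hJT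
  have hnu : ∀ S ∈ 𝒮, 1 ≤ nu 𝒞 S := by
    intro S hS
    rw [hSdef, List.mem_toFinset] at hS
    obtain ⟨j, hj, rfl⟩ := List.mem_map.mp hS
    have hjlt : j < Cs.length := List.mem_range.mp (List.mem_of_mem_filter hj)
    have hC : Cs.getD j ∅ ∈ 𝒞 := by
      rw [← hCs, List.mem_toFinset, List.getD_eq_getElem Cs ∅ hjlt]
      exact List.getElem_mem _
    have : Cs.getD j ∅ ∈ 𝒞.filter (fun C => sep Cs j ⊆ C) :=
      Finset.mem_filter.mpr ⟨hC, Finset.inter_subset_left⟩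
    exact Finset.card_pos.mpr ⟨_, this⟩
  have key : ∀ y, p y * Real.log (p y / jtPD p 𝒞 𝒮 y)
      = p y * Real.log (p y) - ((∑ C ∈ 𝒞, p y * Real.log (marg p C y))
        - ∑ S ∈ 𝒮, ((nu 𝒞 S : ℝ) - 1) * (p y * Real.log (marg p S y))) := by
    intro y
    rcases eq_or_lt_of_le (hp.1 y) with h0 | h0
    · simp [← h0]
    · have hm : ∀ S, 0 < marg p S y := fun S => marg_pos p hp.1 S y h0
      have hq : 0 < jtPD p 𝒞 𝒮 y := by
        unfold jtPD
        apply div_pos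
        · exact Finset.prod_pos (fun C _ => hm C)
        · exact Finset.prod_pos (fun S _ => pow_pos (hm S) _)
      rw [Real.log_div (ne_of_gt h0) (ne_of_gt hq)]
      have hlog : Real.log (jtPD p 𝒞 𝒮 y)
          = (∑ C ∈ 𝒞, Real.log (marg p C y))
            - ∑ S ∈ 𝒮, ((nu 𝒞 S : ℝ) - 1) * Real.log (marg p S y) := by
        unfold jtPD
        rw [Real.log_div (ne_of_gt (Finset.prod_pos (fun C _ => hm C)))
          (ne_of_gt (Finset.prod_pos (fun S _ => pow_pos (hm S) _))),
          Real.log_prod (fun C _ => ne_of_gt (hm C)),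
          Real.log_prod (fun S _ => ne_of_gt (pow_pos (hm S) _))]
        congr 1
        refine Finset.sum_congr rfl (fun S hS => ?_)
        rw [Real.log_pow, Nat.cast_sub (hnu S hS), Nat.cast_one]
      rw [hlog, mul_sub, mul_sub, Finset.mul_sum, Finset.mul_sum]
      congr 2
      exact Finset.sum_congr rfl (fun S _ => by ring)
  unfold KL
  rw [Finset.sum_congr rfl (fun y _ => key y)]
  rw [Finset.sum_sub_distrib, Finset.sum_sub_distrib, Finset.sum_comm,
      Finset.sum_comm (s := Finset.univ) (t := 𝒮)]
  have h1 : ∑ y : Fin d → Ω, p y * Real.log (p y) = -(Hm p Finset.univ) := by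
    unfold Hm
    rw [neg_neg]
    exact Finset.sum_congr rfl (fun y _ => by rw [marg_univ])
  have h2 : ∀ C ∈ 𝒞, ∑ y : Fin d → Ω, p y * Real.log (marg p C y) = -(Hm p C) := by
    intro C _; unfold Hm; rw [neg_neg]
  have h3 : ∀ S ∈ 𝒮, ∑ y : Fin d → Ω, ((nu 𝒞 S : ℝ) - 1) * (p y * Real.log (marg p S y))
      = ((nu 𝒞 S : ℝ) - 1) * (-(Hm p S)) := by
    intro S _; rw [← Finset.mul_sum]; unfold Hm; rw [neg_neg]
  rw [h1, Finset.sum_congr rfl h2, Finset.sum_congr rfl h3]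
  have e2 : ∑ C ∈ 𝒞, -(Hm p C) = -∑ C ∈ 𝒞, Hm p C := Finset.sum_neg_distrib _
  have e3 : ∑ S ∈ 𝒮, ((nu 𝒞 S : ℝ) - 1) * (-(Hm p S))
      = -∑ S ∈ 𝒮, ((nu 𝒞 S : ℝ) - 1) * Hm p S := by
    rw [← Finset.sum_neg_distrib]
    exact Finset.sum_congr rfl (fun S _ => by ring)
  rw [e2, e3]; ring

end TCherryPaper
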